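/- arXiv:1512.01333 — 4 statements merged into one kernel-verified Lean document; each statement's English description precedes it below -/
import Mathlib

section
/- Let T be a rooted tree with root v and branches T_1, ..., T_k, and let S(T), S(T_1), ..., S(T_k) denote the subdivision trees (rooted at the images of the original roots). Then M_0(S(T), x) = ∏_{j=1}^k ( x·M_0(S(T_j), x) + M(S(T_j), x) ). -/
/-- A rooted tree: a root node together with a list of branches (rooted subtrees). -/
inductive RTree : Type
  | node : List RTree → RTree

namespace RTree

/-- Auxiliary fold: from the list of pairs `(M0 Tᵢ x, M Tᵢ x)` of the branches,
compute `(∏ᵢ M(Tᵢ,x), Σⱼ M0(Tⱼ,x) ∏_{i≠j} M(Tᵢ,x))`. -/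
def comb : List (ℝ × ℝ) → ℝ × ℝ
  | [] => (1, 0)
  | (m0, m) :: rest =>
    let pr := comb rest
    (m * pr.1, m0 * pr.1 + m * pr.2)

/-- `MM T x = (M₀(T,x), M₁(T,x))`: generating functions of matchings of `T`
not saturating / saturating the root. -/
def MM : RTree → ℝ → ℝ × ℝ
  | .node ts, x =>
    let pr := comb (ts.attach.map fun t =>
      let q := MM t.1 x
      (q.1, q.1 + q.2))
    (pr.1, x * pr.2)
  decreasing_by have := List.sizeOf_lt_of_mem t.2; simp only [RTree.node.sizeOf_spec]; omega

/-- Generating function of matchings not saturating the root. -/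
def M0 (t : RTree) (x : ℝ) : ℝ := (MM t x).1

/-- Generating function of matchings saturating the root. -/
def M1 (t : RTree) (x : ℝ) : ℝ := (MM t x).2

/-- The matching generating function `M(T,x) = M₀(T,x) + M₁(T,x)`. -/
def M (t : RTree) (x : ℝ) : ℝ := M0 t x + M1 t x

/-- `τ(T,x) = M₀(T,x)/M(T,x)`. -/
noncomputable def tau (t : RTree) (x : ℝ) : ℝ := M0 t x / M t x

/-- The subdivision tree: insert a new vertex in every edge. -/
def subdiv : RTree → RTree
  | .node ts => .node (ts.attach.map fun t => .node [subdiv t.1])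
  decreasing_by have := List.sizeOf_lt_of_mem t.2; simp only [RTree.node.sizeOf_spec]; omega

/-- Number of vertices. -/
def order : RTree → ℕ
  | .node ts => 1 + (ts.attach.map fun t => order t.1).sum
  decreasing_by have := List.sizeOf_lt_of_mem t.2; simp only [RTree.node.sizeOf_spec]; omega

end RTree


open RTree in
lemma comb_fst (l : List (ℝ × ℝ)) : (comb l).1 = (l.map Prod.snd).prod := by
  induction l with
  | nil => simp [comb]
  | cons h t ih => obtain ⟨a, b⟩ := h; simp [comb, ih]

open RTree in
lemma MM_node_fst (ts : List RTree) (x : ℝ) :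
    (MM (RTree.node ts) x).1 = (ts.map fun t => (MM t x).1 + (MM t x).2).prod := by
  rw [MM]
  simp only [comb_fst, List.map_map]
  congr 1
  rw [← List.attach_map_val (l := ts) (f := fun t => (MM t x).1 + (MM t x).2)]
  rfl
  

open RTree in
/-- Lemma 2.3(9): for a rooted tree `T` with branches `ts`,
`M₀(S(T),x) = ∏ⱼ ( x·M₀(S(Tⱼ),x) + M(S(Tⱼ),x) )`. -/
theorem M0_subdiv_node (ts : List RTree) (x : ℝ) :
    M0 (subdiv (RTree.node ts)) x =
      (ts.map fun t => x * M0 (subdiv t) x + M (subdiv t) x).prod := by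
  rw [show subdiv (RTree.node ts) = RTree.node (ts.attach.map fun t => RTree.node [subdiv t.1]) from by rw [subdiv]]
  rw [M0, MM_node_fst, List.map_map]
  rw [← List.attach_map_val (l := ts) (f := fun t => x * M0 (subdiv t) x + M (subdiv t) x)]
  congr 1
  apply List.map_congr_left
  intro t _
  show (MM (RTree.node [subdiv t.1]) x).1 + (MM (RTree.node [subdiv t.1]) x).2
      = x * M0 (subdiv t.1) x + M (subdiv t.1) x
  rw [MM]
  simp [comb, M, M0, M1]
  ring
end

section
/- Let T be a rooted tree with root v and branches T_1, ..., T_k, and let τ(S,x) = M_0(S,x)/M(S,x) for a rooted tree S. Then for the subdivision trees, τ(S(T), x) = 1 / (1 + Σ_{j=1}^k x/(1 + x·τ(S(T_j), x))) for all x > 0. -/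
namespace RTree

lemma comb_good (l : List (ℝ × ℝ)) (h : ∀ p ∈ l, 0 < p.1 ∧ p.1 ≤ p.2) :
    0 < (comb l).1 ∧ 0 ≤ (comb l).2 := by
  induction l with
  | nil => simp [comb]
  | cons a rest ih =>
    obtain ⟨h1, h2⟩ := h a (by simp)
    obtain ⟨ih1, ih2⟩ := ih (fun p hp => h p (by simp [hp]))
    obtain ⟨m0, m⟩ := a
    simp only [comb]
    have hm : 0 < m := lt_of_lt_of_le h1 h2
    constructor <;> positivity

lemma comb_ratio (l : List (ℝ × ℝ)) (h : ∀ p ∈ l, 0 < p.1 ∧ p.1 ≤ p.2) :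
    (comb l).2 / (comb l).1 = (l.map fun p => p.1 / p.2).sum := by
  induction l with
  | nil => simp [comb]
  | cons a rest ih =>
    obtain ⟨h1, h2⟩ := h a (by simp)
    obtain ⟨c1, c2⟩ := comb_good rest (fun p hp => h p (by simp [hp]))
    obtain ⟨m0, m⟩ := a
    have hm : 0 < m := lt_of_lt_of_le h1 h2
    simp only [comb, List.map_cons, List.sum_cons, ← ih (fun p hp => h p (by simp [hp]))]
    field_simp

theorem MM_pos (t : RTree) (x : ℝ) (hx : 0 < x) : 0 < (MM t x).1 ∧ 0 ≤ (MM t x).2 := by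
  obtain ⟨ts⟩ := t
  rw [MM]
  refine ⟨(comb_good _ ?_).1, mul_nonneg hx.le (comb_good _ ?_).2⟩ <;>
  · rintro p hp
    simp only [List.mem_map, List.mem_attach, true_and] at hp
    obtain ⟨⟨t', ht'⟩, rfl⟩ := hp
    have := MM_pos t' x hx
    dsimp only
    exact ⟨this.1, by linarith [this.2]⟩
termination_by sizeOf t
decreasing_by all_goals (have := List.sizeOf_lt_of_mem ht'; simp only [RTree.node.sizeOf_spec]; omega)

lemma MM_single (s : RTree) (x : ℝ) :
    MM (node [s]) x = ((MM s x).1 + (MM s x).2, x * (MM s x).1) := by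
  rw [MM]; simp [comb]

lemma MM_node (ts : List RTree) (x : ℝ) :
    MM (node ts) x =
      ((comb (ts.map fun t => ((MM t x).1, (MM t x).1 + (MM t x).2))).1,
       x * (comb (ts.map fun t => ((MM t x).1, (MM t x).1 + (MM t x).2))).2) := by
  rw [MM]
  simp [List.map_attach_eq_pmap]

end RTree

open RTree in
/-- Lemma 2.3(11): for a rooted tree `T` with branches `ts` and `x > 0`,
`τ(S(T),x) = 1 / (1 + Σⱼ x/(1 + x·τ(S(Tⱼ),x)))`. -/
theorem tau_subdiv_node (ts : List RTree) (x : ℝ) (hx : 0 < x) :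
    tau (subdiv (RTree.node ts)) x =
      1 / (1 + (ts.map fun t => x / (1 + x * tau (subdiv t) x)).sum) := by
  classical
  have key : ∀ t : RTree, 0 < (MM (subdiv t) x).1 ∧ 0 ≤ (MM (subdiv t) x).2 :=
    fun t => MM_pos _ x hx
  set L : List (ℝ × ℝ) := ts.map fun t =>
    ((MM (subdiv t) x).1 + (MM (subdiv t) x).2,
     (MM (subdiv t) x).1 + (MM (subdiv t) x).2 + x * (MM (subdiv t) x).1) with hLdef
  have hL : ∀ p ∈ L, 0 < p.1 ∧ p.1 ≤ p.2 := by
    intro p hp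
    simp only [hLdef, List.mem_map] at hp
    obtain ⟨t, ht, rfl⟩ := hp
    obtain ⟨h1, h2⟩ := key t
    constructor
    · dsimp; linarith
    · dsimp; nlinarith
  have step1 : MM (subdiv (RTree.node ts)) x = ((comb L).1, x * (comb L).2) := by
    rw [subdiv, MM_node]
    simp only [List.map_map, Function.comp_def, List.map_attach_eq_pmap, List.map_pmap, MM_single,
      List.pmap_eq_map, hLdef]
  have hcomb := comb_good L hL
  have hratio := comb_ratio L hL
  have hsum : (ts.map fun t => x / (1 + x * tau (subdiv t) x)).sum
      = x * ((comb L).2 / (comb L).1) := by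
    rw [hratio, hLdef, List.map_map]
    rw [← List.sum_map_mul_left]
    congr 1
    refine List.map_congr_left (fun t ht => ?_)
    obtain ⟨h1, h2⟩ := key t
    simp only [Function.comp_def, tau, M, M0, M1]
    have hM : (0:ℝ) < (MM (subdiv t) x).1 + (MM (subdiv t) x).2 := by linarith
    have hD : (0:ℝ) < (MM (subdiv t) x).1 + (MM (subdiv t) x).2 + x * (MM (subdiv t) x).1 := by
      nlinarith
    field_simp
  rw [hsum]
  simp only [tau, M, M0, M1, step1]
  have h1 := hcomb.1
  have h2 : (0:ℝ) < (comb L).1 + x * (comb L).2 := by nlinarith [hcomb.2]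
  field_simp
end

section
/- For every tree T of order n, the Laplacian coefficient c_k(T) equals the number of k-edge matchings of the subdivision tree S(T), i.e., c_k(T) = m(S(T), k) for k = 0, ..., n. Consequently, the Laplacian coefficient generating function φ(T,x) = Σ_{k=0}^{n-1} c_k(T) x^k equals the matching generating function M(S(T), x). -/
open scoped Classical

variable {V : Type*}

/-- Degree of a vertex. -/
noncomputable def vdeg (G : SimpleGraph V) (v : V) : ℕ := (G.neighborSet v).ncard

/-- The subdivision graph `S(G)`: insert a new vertex in every edge of `G`.
Its vertices are the vertices of `G` together with the edges of `G`, and a vertex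
`v` is adjacent to an edge `e` iff `v` is an endpoint of `e` in `G`. -/
def subdivision (G : SimpleGraph V) : SimpleGraph (V ⊕ G.edgeSet) where
  Adj a b :=
    (∃ v e, a = Sum.inl v ∧ b = Sum.inr e ∧ v ∈ (e : Sym2 V)) ∨
      (∃ v e, b = Sum.inl v ∧ a = Sum.inr e ∧ v ∈ (e : Sym2 V))
  symm := ⟨fun a b h => Or.symm h⟩
  loopless := ⟨fun a => by rintro (⟨v, e, rfl, h, -⟩ | ⟨v, e, rfl, h, -⟩) <;> simp at h⟩

/-- A set of edges of `G` forms a matching: pairwise disjoint edges. -/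
def IsMatchingSet (G : SimpleGraph V) (s : Set (Sym2 V)) : Prop :=
  s ⊆ G.edgeSet ∧ s.Pairwise fun e f => ∀ v, v ∈ e → v ∉ f

/-- `matchCount G k` is the number `m(G,k)` of `k`-edge matchings of `G`. -/
noncomputable def matchCount (G : SimpleGraph V) (k : ℕ) : ℕ :=
  {s : Set (Sym2 V) | IsMatchingSet G s ∧ s.ncard = k}.ncard

/-- The matching generating function `M(G,x) = Σ_k m(G,k) x^k`. -/
noncomputable def matchGen (G : SimpleGraph V) [Fintype V] (x : ℝ) : ℝ :=
  ∑ k ∈ Finset.range (Fintype.card V + 1), (matchCount G k : ℝ) * x ^ k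

/-- The Laplacian matrix `D(G) - A(G)` (over ℝ). -/
noncomputable def lapM (G : SimpleGraph V) [Fintype V] : Matrix V V ℝ :=
  Matrix.of fun i j =>
    if i = j then (vdeg G i : ℝ) else if G.Adj i j then -1 else 0

/-- The adjacency matrix (over ℝ). -/
noncomputable def adjM (G : SimpleGraph V) [Fintype V] : Matrix V V ℝ :=
  Matrix.of fun i j => if G.Adj i j then 1 else 0

/-- The signless Laplacian matrix `D(G) + A(G)` (over ℝ). -/
noncomputable def signlessLapM (G : SimpleGraph V) [Fintype V] : Matrix V V ℝ :=
  Matrix.of fun i j =>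
    if i = j then (vdeg G i : ℝ) else if G.Adj i j then 1 else 0

lemma adjM_isHermitian (G : SimpleGraph V) [Fintype V] :
    (adjM G).IsHermitian := by
  unfold Matrix.IsHermitian
  ext i j
  simp only [Matrix.conjTranspose_apply, adjM, Matrix.of_apply, star_trivial]
  rw [SimpleGraph.adj_comm]

lemma lapM_isHermitian (G : SimpleGraph V) [Fintype V] :
    (lapM G).IsHermitian := by
  unfold Matrix.IsHermitian
  ext i j
  simp only [Matrix.conjTranspose_apply, lapM, Matrix.of_apply, star_trivial]
  by_cases h : i = j
  · subst h; rfl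
  · simp only [h, Ne.symm h, if_false]
    rw [SimpleGraph.adj_comm]

lemma signlessLapM_isHermitian (G : SimpleGraph V) [Fintype V] :
    (signlessLapM G).IsHermitian := by
  unfold Matrix.IsHermitian
  ext i j
  simp only [Matrix.conjTranspose_apply, signlessLapM, Matrix.of_apply, star_trivial]
  by_cases h : i = j
  · subst h; rfl
  · simp only [h, Ne.symm h, if_false]
    rw [SimpleGraph.adj_comm]

/-- The `k`-th Laplacian coefficient `c_k(G)`:
`det(λI - L(G)) = Σ_k (-1)^k c_k(G) λ^{n-k}`. -/
noncomputable def lapCoeff (G : SimpleGraph V) [Fintype V] (k : ℕ) : ℝ :=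
  (-1) ^ k * (lapM G).charpoly.coeff (Fintype.card V - k)

/-- The Laplacian coefficient generating function `φ(G,x) = Σ_{k=0}^{n-1} c_k(G) x^k`. -/
noncomputable def lapGen (G : SimpleGraph V) [Fintype V] (x : ℝ) : ℝ :=
  ∑ k ∈ Finset.range (Fintype.card V), lapCoeff G k * x ^ k

/-- The graph energy: sum of the absolute values of the adjacency eigenvalues. -/
noncomputable def energy (G : SimpleGraph V) [Fintype V] : ℝ :=
  ∑ i, |(adjM_isHermitian G).eigenvalues i|

/-- The Laplacian-energy-like invariant: sum of the square roots of the
Laplacian eigenvalues. -/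
noncomputable def LEL (G : SimpleGraph V) [Fintype V] : ℝ :=
  ∑ i, Real.sqrt ((lapM_isHermitian G).eigenvalues i)

/-- The incidence energy: sum of the singular values of the incidence matrix,
i.e. the sum of the square roots of the signless Laplacian eigenvalues. -/
noncomputable def IE (G : SimpleGraph V) [Fintype V] : ℝ :=
  ∑ i, Real.sqrt ((signlessLapM_isHermitian G).eigenvalues i)

/-- Hosoya index `Z(G) = Σ_k m(G,k)`. -/
noncomputable def hosoya (G : SimpleGraph V) [Fintype V] : ℕ :=
  ∑ k ∈ Finset.range (Fintype.card V + 1), matchCount G k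

/-- The children of `v` in the tree `T` rooted at `v₀`. -/
def rchildren (T : SimpleGraph V) (v₀ v : V) : Set V :=
  {u | T.Adj v u ∧ T.dist v₀ u = T.dist v₀ v + 1}

/-- In the tree `T` rooted at `v₀`, the subtree hanging at `u` is a complete
`d`-ary tree: for some height `h`, every descendant of `u` at distance `< h`
from `u` has exactly `d` children and every other descendant has none. -/
def IsCompleteAry (T : SimpleGraph V) (v₀ : V) (d : ℕ) (u : V) : Prop :=
  ∃ h : ℕ, ∀ w, T.dist v₀ w = T.dist v₀ u + T.dist u w →
    (rchildren T v₀ w).ncard = if T.dist u w < h then d else 0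

/-- `T` is the greedy tree with maximum degree `Δ` (Definition 1.2, with
`Δ = d+1`): `T` is a tree having a root `v₀` of degree `Δ` such that the heights
of any two pendent vertices differ by at most one, and for every vertex at most
one child-subtree fails to be a complete `(Δ-1)`-ary tree. -/
def IsGreedyTree (Δ : ℕ) (T : SimpleGraph V) : Prop :=
  T.IsTree ∧ ∃ v₀ : V,
    vdeg T v₀ = Δ ∧
    (∀ u w : V, vdeg T u = 1 → vdeg T w = 1 → T.dist v₀ u ≤ T.dist v₀ w + 1) ∧
    ∀ v : V, {u | u ∈ rchildren T v₀ v ∧ ¬ IsCompleteAry T v₀ (Δ - 1) u}.Subsingleton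


section ZGAux
namespace ZG
set_option linter.unusedSectionVars false
set_option linter.unusedTactic false
set_option linter.unusedVariables false


variable {V : Type*}

/-- In a tree, a shortest path to `u` does not pass through a vertex farther than `u`,
helper: if `v` lies on a shortest walk from `r` to `u` and `dist r v ≥` the walk length, then `v = u`. -/
lemma mem_support_eq_of_dist_le {T : SimpleGraph V} {r u v : V}
    (p : T.Walk r u) (hp : p.length = T.dist r u) (hv : v ∈ p.support)
    (hd : T.dist r u ≤ T.dist r v) : v = u := by
  have h1 : T.dist r v ≤ (p.takeUntil v hv).length := SimpleGraph.dist_le _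
  have h2 : (p.takeUntil v hv).length + (p.dropUntil v hv).length = p.length := by
    rw [← SimpleGraph.Walk.length_append, SimpleGraph.Walk.take_spec]
  have h3 : (p.dropUntil v hv).length = 0 := by omega
  exact SimpleGraph.Walk.eq_of_length_eq_zero h3

lemma concat_isPath {G : SimpleGraph V} {u v w : V} {p : G.Walk u v}
    (hp : p.IsPath) (hw : w ∉ p.support) (h : G.Adj v w) : (p.concat h).IsPath := by
  rw [← SimpleGraph.Walk.isPath_reverse_iff, SimpleGraph.Walk.reverse_concat]
  exact (SimpleGraph.Walk.cons_isPath_iff _ _).2 ⟨hp.reverse, by simpa using hw⟩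

/-- Adjacent vertices in a tree have different distances from any root. -/
lemma adj_dist_ne {T : SimpleGraph V} (hT : T.IsTree) (r : V) {u v : V}
    (h : T.Adj u v) : T.dist r u ≠ T.dist r v := by
  intro he
  obtain ⟨p, hp, hpl⟩ := (hT.isConnected).exists_path_of_dist r u
  obtain ⟨q, hq, hql⟩ := (hT.isConnected).exists_path_of_dist r v
  have hvp : v ∉ p.support := by
    intro hv
    have hvu := mem_support_eq_of_dist_le p hpl hv (by omega)
    exact h.ne hvu.symm
  have hpath : (p.concat h).IsPath := concat_isPath hp hvp h
  have : (⟨p.concat h, hpath⟩ : T.Path r v) = ⟨q, hq⟩ :=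
    hT.IsAcyclic.path_unique _ _
  have hlen : (p.concat h).length = q.length := by
    have h2 : (⟨p.concat h, hpath⟩ : T.Path r v).1 = (⟨q, hq⟩ : T.Path r v).1 := by rw [this]
    simpa using congrArg SimpleGraph.Walk.length h2
  rw [SimpleGraph.Walk.length_concat, hpl, hql] at hlen
  omega

/-- Unique parent: in a tree, a vertex has at most one neighbor strictly closer to the root. -/
lemma unique_parent {T : SimpleGraph V} (hT : T.IsTree) (r : V) {v u₁ u₂ : V}
    (h₁ : T.Adj v u₁) (h₂ : T.Adj v u₂)
    (d₁ : T.dist r u₁ < T.dist r v) (d₂ : T.dist r u₂ < T.dist r v) : u₁ = u₂ := by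
  have conn := hT.isConnected
  have tri : ∀ u : V, T.Adj v u → T.dist r v ≤ T.dist r u + 1 := by
    intro u hu
    have := conn.dist_triangle (u := r) (v := u) (w := v)
    have h1 : T.dist u v = 1 := (SimpleGraph.dist_eq_one_iff_adj).2 hu.symm
    omega
  have e₁ : T.dist r u₁ + 1 = T.dist r v := by have := tri u₁ h₁; omega
  have e₂ : T.dist r u₂ + 1 = T.dist r v := by have := tri u₂ h₂; omega
  obtain ⟨p₁, hp₁, hl₁⟩ := conn.exists_path_of_dist r u₁
  obtain ⟨p₂, hp₂, hl₂⟩ := conn.exists_path_of_dist r u₂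
  have hv₁ : v ∉ p₁.support := by
    intro hv
    have := mem_support_eq_of_dist_le p₁ hl₁ hv (by omega)
    subst this; omega
  have hv₂ : v ∉ p₂.support := by
    intro hv
    have := mem_support_eq_of_dist_le p₂ hl₂ hv (by omega)
    subst this; omega
  have hpath₁ : (p₁.concat h₁.symm).IsPath := concat_isPath hp₁ hv₁ h₁.symm
  have hpath₂ : (p₂.concat h₂.symm).IsPath := concat_isPath hp₂ hv₂ h₂.symm
  have heq : (⟨p₁.concat h₁.symm, hpath₁⟩ : T.Path r v) = ⟨p₂.concat h₂.symm, hpath₂⟩ :=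
    hT.IsAcyclic.path_unique _ _
  have heq' : p₁.concat h₁.symm = p₂.concat h₂.symm := congrArg Subtype.val heq
  obtain ⟨hv, -⟩ := SimpleGraph.Walk.concat_inj heq' 
  exact hv



lemma sub_adj {T : SimpleGraph V} {a b : V ⊕ T.edgeSet} (h : (subdivision T).Adj a b) :
    (∃ v e, a = Sum.inl v ∧ b = Sum.inr e ∧ v ∈ (e : Sym2 V)) ∨
      (∃ v e, b = Sum.inl v ∧ a = Sum.inr e ∧ v ∈ (e : Sym2 V)) := h

lemma sub_adj_inl_inr {T : SimpleGraph V} {v : V} {e : T.edgeSet} :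
    (subdivision T).Adj (Sum.inl v) (Sum.inr e) ↔ v ∈ (e : Sym2 V) := by
  constructor
  · rintro (⟨v', e', h1, h2, h3⟩ | ⟨v', e', h1, h2, h3⟩)
    · cases h1; cases h2; exact h3
    · exact absurd h1 (by simp)
  · intro h; exact Or.inl ⟨v, e, rfl, rfl, h⟩

lemma adj_dist_cases {T : SimpleGraph V} (hT : T.IsTree) (r : V) {u v : V}
    (h : T.Adj u v) : T.dist r v = T.dist r u + 1 ∨ T.dist r u = T.dist r v + 1 := by
  have hne := adj_dist_ne hT r h
  have conn := hT.isConnected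
  have h1 : T.dist u v = 1 := SimpleGraph.dist_eq_one_iff_adj.2 h
  have t1 := conn.dist_triangle (u := r) (v := u) (w := v)
  have t2 := conn.dist_triangle (u := r) (v := v) (w := u)
  rw [SimpleGraph.dist_comm (u := v)] at t2
  omega

/-- Height function on the subdivision graph. -/
noncomputable def ht (T : SimpleGraph V) (r : V) : V ⊕ T.edgeSet → ℕ :=
  Sum.elim (fun v => 2 * T.dist r v)
    (fun e => Sym2.lift ⟨fun a b => T.dist r a + T.dist r b, fun a b => by ring⟩ (e : Sym2 V))

lemma ht_adj {T : SimpleGraph V} (hT : T.IsTree) (r : V) {a b : V ⊕ T.edgeSet}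
    (h : (subdivision T).Adj a b) : ht T r a + 1 = ht T r b ∨ ht T r b + 1 = ht T r a := by
  have key : ∀ (v : V) (e : T.edgeSet), v ∈ (e : Sym2 V) →
      ht T r (Sum.inl v) + 1 = ht T r (Sum.inr e) ∨
      ht T r (Sum.inr e) + 1 = ht T r (Sum.inl v) := by
    intro v e hv
    obtain ⟨u, hu⟩ := Sym2.mem_iff_exists.1 hv
    have hadj : T.Adj v u := by
      have := e.2
      rw [hu] at this
      exact (SimpleGraph.mem_edgeSet T).1 this
    have hcases := adj_dist_cases hT r hadj
    simp only [ht, Sum.elim_inl, Sum.elim_inr, hu, Sym2.lift_mk]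
    omega
  rcases h with ⟨v, e, rfl, rfl, hv⟩ | ⟨v, e, rfl, rfl, hv⟩
  · exact key v e hv
  · exact (key v e hv).symm

/-- Unique lower neighbor in the subdivision of a tree. -/
lemma ht_unique_parent {T : SimpleGraph V} (hT : T.IsTree) (r : V) {x a b : V ⊕ T.edgeSet}
    (ha : (subdivision T).Adj x a) (hb : (subdivision T).Adj x b)
    (hha : ht T r a < ht T r x) (hhb : ht T r b < ht T r x) : a = b := by
  cases x with
  | inl v =>
    -- a, b are edges containing v whose other endpoints are closer to r
    have get : ∀ {c : V ⊕ T.edgeSet}, (subdivision T).Adj (Sum.inl v) c →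
        ht T r c < ht T r (Sum.inl v) →
        ∃ (e : T.edgeSet) (u : V), c = Sum.inr e ∧ (e : Sym2 V) = s(v, u) ∧
          T.Adj v u ∧ T.dist r u < T.dist r v := by
      intro c hc hlt
      rcases hc with ⟨v', e, h1, h2, h3⟩ | ⟨v', e, h1, h2, h3⟩
      · injection h1 with h1; subst h1
        obtain ⟨u, hu⟩ := Sym2.mem_iff_exists.1 h3
        have hadj : T.Adj v u := by
          have := e.2; rw [hu] at this; exact (SimpleGraph.mem_edgeSet T).1 this
        subst h2
        refine ⟨e, u, rfl, hu, hadj, ?_⟩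
        simp only [ht, Sum.elim_inl, Sum.elim_inr, hu, Sym2.lift_mk] at hlt
        omega
      · exact absurd h2 (by simp)
    obtain ⟨e₁, u₁, rfl, he₁, hadj₁, hd₁⟩ := get ha hha
    obtain ⟨e₂, u₂, rfl, he₂, hadj₂, hd₂⟩ := get hb hhb
    have : u₁ = u₂ := unique_parent hT r hadj₁ hadj₂ hd₁ hd₂
    subst this
    congr 1
    exact Subtype.ext (by rw [he₁, he₂])
  | inr e =>
    have get : ∀ {c : V ⊕ T.edgeSet}, (subdivision T).Adj (Sum.inr e) c →
        ∃ u : V, c = Sum.inl u ∧ u ∈ (e : Sym2 V) := by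
      intro c hc
      rcases hc with ⟨v', e', h1, h2, h3⟩ | ⟨v', e', h1, h2, h3⟩
      · exact absurd h1 (by simp)
      · cases h2; exact ⟨v', h1, h3⟩
    obtain ⟨u₁, rfl, hu₁⟩ := get ha
    obtain ⟨u₂, rfl, hu₂⟩ := get hb
    by_contra hne
    have hne' : u₁ ≠ u₂ := fun h => hne (by rw [h])
    have he : (e : Sym2 V) = s(u₁, u₂) := by
      obtain ⟨w, hw⟩ := Sym2.mem_iff_exists.1 hu₁
      rw [hw] at hu₂
      rcases Sym2.mem_iff.1 hu₂ with h | h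
      · exact absurd h.symm hne'
      · rw [hw, h]
    simp only [ht, Sum.elim_inl, Sum.elim_inr, he, Sym2.lift_mk] at hha hhb
    omega

/-- Any permutation of the subdivision of a tree moving points only along edges
is an involution. -/
lemma adm_involution {T : SimpleGraph V} [Fintype V] (hT : T.IsTree) (r : V)
    (σ : Equiv.Perm (V ⊕ T.edgeSet))
    (hσ : ∀ i, σ i ≠ i → (subdivision T).Adj i (σ i)) : ∀ i, σ (σ i) = i := by
  intro i
  by_cases hi : σ i = i
  · rw [hi, hi]
  -- orbit of i
  have : Finite (V ⊕ T.edgeSet) := inferInstance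
  set Ω : Finset (V ⊕ T.edgeSet) := Finset.univ.filter (fun x => ∃ n : ℕ, (σ ^ n) i = x) with hΩ
  have hiΩ : i ∈ Ω := by
    simp only [hΩ, Finset.mem_filter, Finset.mem_univ, true_and]
    exact ⟨0, rfl⟩
  obtain ⟨w, hwΩ, hwmax⟩ := Ω.exists_max_image (ht T r) ⟨i, hiΩ⟩
  simp only [hΩ, Finset.mem_filter, Finset.mem_univ, true_and] at hwΩ
  obtain ⟨n, hn⟩ := hwΩ
  have horder : orderOf σ ≠ 0 := by
    have : IsOfFinOrder σ := isOfFinOrder_of_finite σ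
    exact (orderOf_pos_iff.2 this).ne'
  have hmem : ∀ m : ℕ, (σ ^ m) i ∈ Ω := by
    intro m
    simp only [hΩ, Finset.mem_filter, Finset.mem_univ, true_and]
    exact ⟨m, rfl⟩
  -- σ w ≠ w
  have hsw : σ w ≠ w := by
    intro h
    rw [← hn] at h
    have : σ ((σ ^ n) i) = (σ ^ n) (σ i) := by
      rw [← Equiv.Perm.mul_apply, ← Equiv.Perm.mul_apply, ← pow_succ', ← pow_succ]
    rw [this] at h
    exact hi ((σ ^ n).injective h)
  have hswm : σ w = (σ ^ (n + 1)) i := by rw [pow_succ', Equiv.Perm.mul_apply, hn]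
  have hsiw : σ⁻¹ w = (σ ^ (n + orderOf σ - 1)) i := by
    have h1 : (σ ^ (n + orderOf σ - 1)) i = (σ ^ (orderOf σ - 1)) ((σ ^ n) i) := by
      rw [← Equiv.Perm.mul_apply, ← pow_add]
      have h5 : orderOf σ - 1 + n = n + orderOf σ - 1 := by omega
      rw [h5]
    rw [h1, hn]
    have h2 : σ ^ (orderOf σ - 1) = σ⁻¹ := by
      rw [eq_inv_iff_mul_eq_one, ← pow_succ]
      have h4 : orderOf σ - 1 + 1 = orderOf σ := by omega
      rw [h4, pow_orderOf_eq_one]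
    rw [h2]
  have hsiw_ne : σ⁻¹ w ≠ w := by
    intro h
    have h' := congrArg σ h
    rw [Equiv.Perm.coe_inv, Equiv.apply_symm_apply] at h'
    exact hsw h'.symm
  -- both neighbors have smaller height
  have hadj1 : (subdivision T).Adj w (σ w) := hσ w hsw
  have hadj2 : (subdivision T).Adj w (σ⁻¹ w) := by
    have hne : σ (σ⁻¹ w) ≠ σ⁻¹ w := by
      rw [Equiv.Perm.coe_inv, Equiv.apply_symm_apply]
      exact fun h => hsiw_ne h.symm
    have h := hσ (σ⁻¹ w) hne
    rw [Equiv.Perm.coe_inv, Equiv.apply_symm_apply] at h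
    exact h.symm
  have hle1 : ht T r (σ w) ≤ ht T r w := hwmax _ (by rw [hswm]; exact hmem _)
  have hle2 : ht T r (σ⁻¹ w) ≤ ht T r w := hwmax _ (by rw [hsiw]; exact hmem _)
  have hlt1 : ht T r (σ w) < ht T r w := by
    rcases ht_adj hT r hadj1 with h | h <;> omega
  have hlt2 : ht T r (σ⁻¹ w) < ht T r w := by
    rcases ht_adj hT r hadj2 with h | h <;> omega
  have heq : σ w = σ⁻¹ w := ht_unique_parent hT r hadj1 hadj2 hlt1 hlt2
  have hw2 : σ (σ w) = w := by rw [heq, Equiv.Perm.coe_inv, Equiv.apply_symm_apply]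
  -- transfer back to i
  have : (σ ^ n) (σ (σ i)) = (σ ^ n) i := by
    calc (σ ^ n) (σ (σ i)) = σ (σ ((σ ^ n) i)) := by
          rw [← Equiv.Perm.mul_apply, ← Equiv.Perm.mul_apply, ← Equiv.Perm.mul_apply,
            ← Equiv.Perm.mul_apply]
          congr 1
          group
        _ = (σ ^ n) i := by rw [hn, hw2]
  exact (σ ^ n).injective this


lemma sign_involution {α : Type*} [Fintype α] [DecidableEq α] :
    ∀ (n : ℕ) (σ : Equiv.Perm α), σ.support.card = n → (∀ i, σ (σ i) = i) →
      ∃ k, n = 2 * k ∧ Equiv.Perm.sign σ = (-1) ^ k := by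
  intro n
  induction n using Nat.strong_induction_on with
  | _ n ih =>
    intro σ hcard hinv
    rcases Finset.eq_empty_or_nonempty σ.support with he | ⟨a, ha⟩
    · have h1 : σ = 1 := Equiv.Perm.support_eq_empty_iff.1 he
      refine ⟨0, ?_, ?_⟩
      · rw [← hcard, he]; simp
      · rw [h1]; simp
    · set b := σ a with hb
      have hba : b ≠ a := Equiv.Perm.mem_support.1 ha
      have hσb : σ b = a := hinv a
      set τ := Equiv.swap a b * σ with hτ
      have hτa : τ a = a := by
        simp only [hτ, Equiv.Perm.mul_apply, ← hb, Equiv.swap_apply_right]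
      have hτb : τ b = b := by
        simp only [hτ, Equiv.Perm.mul_apply, hσb, Equiv.swap_apply_left]
      have hother : ∀ x, x ≠ a → x ≠ b → τ x = σ x := by
        intro x hxa hxb
        have h1 : σ x ≠ a := by
          intro h; apply hxb; rw [← hinv x, h, hb]
        have h2 : σ x ≠ b := by
          intro h; apply hxa; rw [← hinv x, h, hσb]
        simp only [hτ, Equiv.Perm.mul_apply, Equiv.swap_apply_of_ne_of_ne h1 h2]
      have hτinv : ∀ x, τ (τ x) = x := by
        intro x
        by_cases hxa : x = a
        · rw [hxa, hτa, hτa]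
        by_cases hxb : x = b
        · rw [hxb, hτb, hτb]
        · rw [hother x hxa hxb]
          have h1 : σ x ≠ a := by intro h; apply hxb; rw [← hinv x, h, hb]
          have h2 : σ x ≠ b := by intro h; apply hxa; rw [← hinv x, h, hσb]
          rw [hother _ h1 h2, hinv]
      have hsupp : τ.support = σ.support \ {a, b} := by
        ext x
        simp only [Equiv.Perm.mem_support, Finset.mem_sdiff, Finset.mem_insert,
          Finset.mem_singleton]
        constructor
        · intro hx
          by_cases hxa : x = a
          · exact absurd (hxa ▸ hτa) hx
          by_cases hxb : x = b
          · exact absurd (hxb ▸ hτb) hx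
          · rw [hother x hxa hxb] at hx
            exact ⟨hx, fun h => h.elim hxa hxb⟩
        · rintro ⟨hx, hnab⟩
          push_neg at hnab
          rw [hother x hnab.1 hnab.2]
          exact hx
      have hbmem : b ∈ σ.support := by
        rw [Equiv.Perm.mem_support, hσb]
        exact fun h => hba (h ▸ rfl)
      have habsub : {a, b} ⊆ σ.support := by
        intro x hx
        rcases Finset.mem_insert.1 hx with rfl | hx
        · exact ha
        · rw [Finset.mem_singleton] at hx; subst hx; exact hbmem
      have hcards : τ.support.card = n - 2 := by
        rw [hsupp, Finset.card_sdiff_of_subset habsub, hcard]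
        congr 1
        rw [Finset.card_insert_of_notMem (by simp [Ne.symm hba]), Finset.card_singleton]
      have hn2 : 2 ≤ n := by
        rw [← hcard]
        calc 2 = ({a, b} : Finset α).card := by
              rw [Finset.card_insert_of_notMem (by simp [Ne.symm hba]), Finset.card_singleton]
          _ ≤ σ.support.card := Finset.card_le_card habsub
      obtain ⟨k, hk1, hk2⟩ := ih (n - 2) (by omega) τ hcards hτinv
      refine ⟨k + 1, by omega, ?_⟩
      have hστ : σ = Equiv.swap a b * τ := by
        rw [hτ, ← mul_assoc, Equiv.swap_mul_self, one_mul]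
      rw [hστ, map_mul, Equiv.Perm.sign_swap hba.symm, hk2]
      rw [pow_succ, mul_comm]


section Counting

variable {V : Type*} [Fintype V]

/-- Admissible permutations: moving points only along edges of the subdivision graph. -/
noncomputable def AdmF (T : SimpleGraph V) : Finset (Equiv.Perm (V ⊕ T.edgeSet)) :=
  Finset.univ.filter (fun σ => ∀ i, σ i ≠ i → (subdivision T).Adj i (σ i))

/-- The matching associated with a permutation. -/
def Fm {T : SimpleGraph V} (σ : Equiv.Perm (V ⊕ T.edgeSet)) : Set (Sym2 (V ⊕ T.edgeSet)) :=
  (fun i => s(i, σ i)) '' {i | σ i ≠ i}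

variable {T : SimpleGraph V}

lemma mem_AdmF {σ : Equiv.Perm (V ⊕ T.edgeSet)} :
    σ ∈ AdmF T ↔ ∀ i, σ i ≠ i → (subdivision T).Adj i (σ i) := by
  simp [AdmF]

lemma Fm_edge_eq {σ : Equiv.Perm (V ⊕ T.edgeSet)} (hinv : ∀ i, σ (σ i) = i)
    {e : Sym2 (V ⊕ T.edgeSet)} (he : e ∈ Fm σ) {v : V ⊕ T.edgeSet} (hv : v ∈ e) :
    e = s(v, σ v) := by
  obtain ⟨i, hi, rfl⟩ := he
  rcases Sym2.mem_iff.1 hv with rfl | rfl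
  · rfl
  · rw [hinv]
    exact Sym2.eq_swap

lemma Fm_isMatching {σ : Equiv.Perm (V ⊕ T.edgeSet)} (hadm : σ ∈ AdmF T)
    (hinv : ∀ i, σ (σ i) = i) : IsMatchingSet (subdivision T) (Fm σ) := by
  constructor
  · rintro e ⟨i, hi, rfl⟩
    exact (SimpleGraph.mem_edgeSet _).2 (mem_AdmF.1 hadm i hi)
  · intro e he f hf hef v hve hvf
    exact hef ((Fm_edge_eq hinv he hve).trans (Fm_edge_eq hinv hf hvf).symm)

lemma support_card_eq {σ : Equiv.Perm (V ⊕ T.edgeSet)} (hinv : ∀ i, σ (σ i) = i) :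
    σ.support.card = 2 * (σ.support.image (fun i => s(i, σ i))).card := by
  classical
  rw [Finset.card_eq_sum_card_image (fun i => s(i, σ i)) σ.support]
  rw [Finset.sum_congr rfl (fun e he => ?_), Finset.sum_const, smul_eq_mul, mul_comm]
  obtain ⟨i, hi, rfl⟩ := Finset.mem_image.1 he
  have hii : σ i ≠ i := Equiv.Perm.mem_support.1 hi
  have hfib : {a ∈ σ.support | s(a, σ a) = s(i, σ i)} = {i, σ i} := by
    ext j
    simp only [Finset.mem_filter, Equiv.Perm.mem_support, Finset.mem_insert,
      Finset.mem_singleton]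
    constructor
    · rintro ⟨hj, hjs⟩
      rcases Sym2.eq_iff.1 hjs with ⟨h1, -⟩ | ⟨h1, -⟩
      · exact Or.inl h1
      · exact Or.inr h1
    · rintro (rfl | rfl)
      · exact ⟨hii, rfl⟩
      · refine ⟨?_, ?_⟩
        · rw [hinv]; exact fun h => hii h.symm
        · rw [hinv]; exact Sym2.eq_swap
  rw [hfib, Finset.card_insert_of_notMem (by simp only [Finset.mem_singleton]; exact fun h => hii h.symm), Finset.card_singleton]

lemma Fm_coe {σ : Equiv.Perm (V ⊕ T.edgeSet)} :
    Fm σ = ↑(σ.support.image (fun i => s(i, σ i))) := by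
  rw [Finset.coe_image]
  unfold Fm
  congr 1
  ext i
  simp [Equiv.Perm.mem_support]

lemma Fm_ncard {σ : Equiv.Perm (V ⊕ T.edgeSet)} (hinv : ∀ i, σ (σ i) = i) :
    2 * (Fm σ).ncard = σ.support.card := by
  rw [Fm_coe, Set.ncard_coe_finset, support_card_eq hinv]

lemma Fm_injOn (hT : T.IsTree) (r : V) :
    Set.InjOn Fm (AdmF T : Set (Equiv.Perm (V ⊕ T.edgeSet))) := by
  intro σ hσ τ hτ hF
  rw [Finset.mem_coe, mem_AdmF] at hσ hτ
  have hσinv := adm_involution hT r σ hσ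
  have hτinv := adm_involution hT r τ hτ
  have key : ∀ (σ' τ' : Equiv.Perm (V ⊕ T.edgeSet)), (∀ i, τ' (τ' i) = i) →
      Fm σ' = Fm τ' → ∀ i, σ' i ≠ i → τ' i = σ' i := by
    intro σ' τ' hτ'inv hF' i hi
    have he : s(i, σ' i) ∈ Fm τ' := hF' ▸ ⟨i, hi, rfl⟩
    obtain ⟨j, hj, hje⟩ := he
    rcases Sym2.eq_iff.1 hje with ⟨rfl, h2⟩ | ⟨h1, h2⟩
    · exact h2
    · subst h1
      calc τ' i = τ' (τ' (σ' i)) := by rw [h2]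
        _ = σ' i := hτ'inv _
  ext i
  by_cases h1 : σ i = i
  · by_cases h2 : τ i = i
    · rw [h1, h2]
    · exact key τ σ hσinv hF.symm i h2
  · exact (key σ τ hτinv hF i h1).symm

lemma Fm_surjOn (hT : T.IsTree) (k : ℕ) {s : Set (Sym2 (V ⊕ T.edgeSet))}
    (hs : IsMatchingSet (subdivision T) s) (hk : s.ncard = k) :
    ∃ σ ∈ (AdmF T).filter (fun σ => σ.support.card = 2 * k), Fm σ = s := by
  classical
  have uniq : ∀ i j j' : V ⊕ T.edgeSet, s(i, j) ∈ s → s(i, j') ∈ s → j = j' := by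
    intro i j j' hj hj'
    have hadj : (subdivision T).Adj i j := (SimpleGraph.mem_edgeSet _).1 (hs.1 hj)
    by_cases he : s(i, j) = s(i, j')
    · rcases Sym2.eq_iff.1 he with ⟨-, h2⟩ | ⟨h1, h2⟩
      · exact h2
      · exact absurd h2.symm hadj.ne
    · exact absurd (Sym2.mem_mk_left i j') (hs.2 hj hj' he i (Sym2.mem_mk_left i j))
  set f : (V ⊕ T.edgeSet) → (V ⊕ T.edgeSet) := fun i =>
    if h : ∃ j, s(i, j) ∈ s then Classical.choose h else i with hf
  have hfspec : ∀ i j, s(i, j) ∈ s → f i = j := by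
    intro i j hj
    have h : ∃ j', s(i, j') ∈ s := ⟨j, hj⟩
    simp only [hf, dif_pos h]
    exact uniq i _ j (Classical.choose_spec h) hj
  have hfinv : Function.Involutive f := by
    intro i
    by_cases h : ∃ j, s(i, j) ∈ s
    · have h1 : f i = Classical.choose h := by simp only [hf, dif_pos h]
      have h2 : s(i, f i) ∈ s := h1 ▸ Classical.choose_spec h
      have h3 : s(f i, i) ∈ s := Sym2.eq_swap ▸ h2
      exact hfspec (f i) i h3
    · have h1 : f i = i := by simp only [hf, dif_neg h]
      rw [h1, h1]
  set σ := hfinv.toPerm f with hσdef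
  have hσapp : ∀ i, σ i = f i := fun i => rfl
  have hmoved : ∀ i, σ i ≠ i → s(i, σ i) ∈ s := by
    intro i hi
    rw [hσapp] at hi ⊢
    by_cases h : ∃ j, s(i, j) ∈ s
    · have h1 : f i = Classical.choose h := by simp only [hf, dif_pos h]
      rw [h1]; exact Classical.choose_spec h
    · exact absurd (by simp only [hf, dif_neg h]) hi
  have hadm : σ ∈ AdmF T := by
    rw [mem_AdmF]
    intro i hi
    exact (SimpleGraph.mem_edgeSet _).1 (hs.1 (hmoved i hi))
  have hFm : Fm σ = s := by
    apply Set.Subset.antisymm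
    · rintro e ⟨i, hi, rfl⟩
      exact hmoved i hi
    · intro e he
      revert he
      refine Sym2.ind (fun a b he => ?_) e
      have hadj : (subdivision T).Adj a b := (SimpleGraph.mem_edgeSet _).1 (hs.1 he)
      have hfa : f a = b := hfspec a b he
      have hab : σ a ≠ a := by rw [hσapp, hfa]; exact hadj.ne'
      exact ⟨a, hab, by show s(a, σ a) = s(a, b); rw [hσapp, hfa]⟩
  refine ⟨σ, ?_, hFm⟩
  rw [Finset.mem_filter]
  refine ⟨hadm, ?_⟩
  have := Fm_ncard (σ := σ) (fun i => hfinv i)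
  rw [hFm, hk] at this
  omega

lemma matchCount_eq_card (hT : T.IsTree) (k : ℕ) :
    matchCount (subdivision T) k
      = ((AdmF T).filter (fun σ => σ.support.card = 2 * k)).card := by
  classical
  have hne : Nonempty V := hT.isConnected.nonempty
  set r := Classical.arbitrary V with hr
  set A := (AdmF T).filter (fun σ : Equiv.Perm (V ⊕ T.edgeSet) => σ.support.card = 2 * k)
    with hA
  have himg : {s : Set (Sym2 (V ⊕ T.edgeSet)) |
      IsMatchingSet (subdivision T) s ∧ s.ncard = k} = Fm '' (A : Set _) := by
    apply Set.Subset.antisymm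
    · rintro s ⟨hs, hk⟩
      obtain ⟨σ, hσ, hFm⟩ := Fm_surjOn hT k hs hk
      exact ⟨σ, hσ, hFm⟩
    · rintro s ⟨σ, hσ, rfl⟩
      rw [Finset.mem_coe, hA, Finset.mem_filter] at hσ
      obtain ⟨hadm, hcard⟩ := hσ
      have hinv := adm_involution hT r σ (mem_AdmF.1 hadm)
      refine ⟨Fm_isMatching hadm hinv, ?_⟩
      have := Fm_ncard (σ := σ) hinv
      omega
  rw [matchCount, himg, Set.ncard_image_of_injOn, Set.ncard_coe_finset]
  intro σ hσ τ hτ h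
  have hsub : (A : Set (Equiv.Perm (V ⊕ T.edgeSet))) ⊆
      ((AdmF T : Finset (Equiv.Perm (V ⊕ T.edgeSet))) : Set (Equiv.Perm (V ⊕ T.edgeSet))) := by
    intro x hx
    rw [Finset.mem_coe, hA, Finset.mem_filter] at hx
    exact hx.1
  exact Fm_injOn hT r (hsub hσ) (hsub hτ) h

end Counting

section Det

variable {V : Type*} [Fintype V] {T : SimpleGraph V}

lemma card_sum_W (hT : T.IsTree) :
    Fintype.card (V ⊕ T.edgeSet) = 2 * Fintype.card V - 1 := by
  have hne : Nonempty V := hT.isConnected.nonempty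
  have h0 : T.edgeFinset.card + 1 = Fintype.card V := hT.card_edgeFinset
  rw [SimpleGraph.edgeFinset_card] at h0
  rw [Fintype.card_sum]
  omega

lemma M_apply (x : ℝ) (a b : V ⊕ T.edgeSet) :
    (x • (1 : Matrix (V ⊕ T.edgeSet) (V ⊕ T.edgeSet) ℝ) - adjM (subdivision T)) a b =
      (if a = b then x else 0) - (if (subdivision T).Adj a b then 1 else 0) := by
  simp [Matrix.sub_apply, Matrix.smul_apply, Matrix.one_apply, adjM, mul_ite]

lemma sign_smul_real (u : ℤˣ) (z : ℝ) : u • z = ((u : ℤ) : ℝ) * z := by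
  rw [Units.smul_def, zsmul_eq_mul]

lemma adm_even_card (hT : T.IsTree) {σ : Equiv.Perm (V ⊕ T.edgeSet)} (hσ : σ ∈ AdmF T) :
    ∃ k, σ.support.card = 2 * k ∧ Equiv.Perm.sign σ = (-1) ^ k := by
  classical
  have hne : Nonempty V := hT.isConnected.nonempty
  have hinv := adm_involution hT (Classical.arbitrary V) σ (mem_AdmF.1 hσ)
  exact sign_involution _ σ rfl hinv

lemma detA_eq (hT : T.IsTree) (x : ℝ) :
    (x • (1 : Matrix (V ⊕ T.edgeSet) (V ⊕ T.edgeSet) ℝ) - adjM (subdivision T)).det =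
      ∑ σ ∈ AdmF T, (-1 : ℝ) ^ (σ.support.card / 2) *
        x ^ (Fintype.card (V ⊕ T.edgeSet) - σ.support.card) := by
  classical
  rw [Matrix.det_apply]
  rw [← Finset.sum_subset (Finset.subset_univ (AdmF T))
    (fun σ _ hσ => ?_)]
  · refine Finset.sum_congr rfl (fun σ hσ => ?_)
    obtain ⟨k, hk, hsign⟩ := adm_even_card hT hσ
    have hadm := mem_AdmF.1 hσ
    have hprod : (∏ i, (x • (1 : Matrix (V ⊕ T.edgeSet) (V ⊕ T.edgeSet) ℝ) -
        adjM (subdivision T)) (σ i) i) =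
        x ^ (Fintype.card (V ⊕ T.edgeSet) - σ.support.card) := by
      rw [← Finset.prod_mul_prod_compl σ.support]
      have h1 : ∀ i ∈ σ.support, (x • (1 : Matrix (V ⊕ T.edgeSet) (V ⊕ T.edgeSet) ℝ) -
          adjM (subdivision T)) (σ i) i = -1 := by
        intro i hi
        have hii := Equiv.Perm.mem_support.1 hi
        have hadj : (subdivision T).Adj (σ i) i := (hadm i hii).symm
        rw [M_apply, if_neg hii, if_pos hadj]
        ring
      have h2 : ∀ i ∈ σ.supportᶜ, (x • (1 : Matrix (V ⊕ T.edgeSet) (V ⊕ T.edgeSet) ℝ) -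
          adjM (subdivision T)) (σ i) i = x := by
        intro i hi
        rw [Finset.mem_compl, Equiv.Perm.notMem_support] at hi
        rw [M_apply, if_pos hi, if_neg (by rw [hi]; exact (subdivision T).irrefl)]
        ring
      rw [Finset.prod_congr rfl h1, Finset.prod_congr rfl h2,
        Finset.prod_const, Finset.prod_const, Finset.card_compl, hk]
      rw [show (-1 : ℝ) ^ (2 * k) = 1 by rw [pow_mul]; norm_num, one_mul, ← hk]
    rw [hprod, hsign, sign_smul_real]
    have : σ.support.card / 2 = k := by omega
    rw [this, hk]
    push_cast
    ring_nf
  · -- vanishing for non-admissible permutations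
    rw [mem_AdmF] at hσ
    push_neg at hσ
    obtain ⟨i, hi, hnadj⟩ := hσ
    have hzero : (x • (1 : Matrix (V ⊕ T.edgeSet) (V ⊕ T.edgeSet) ℝ) -
        adjM (subdivision T)) (σ i) i = 0 := by
      rw [M_apply, if_neg hi, if_neg (fun h => hnadj h.symm)]
      ring
    have hp : (∏ j, (x • (1 : Matrix (V ⊕ T.edgeSet) (V ⊕ T.edgeSet) ℝ) -
        adjM (subdivision T)) (σ j) j) = 0 :=
      Finset.prod_eq_zero (Finset.mem_univ i) hzero
    rw [hp, smul_zero]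

lemma matchCount_zero (hT : T.IsTree) {k : ℕ} (hk : Fintype.card V ≤ k) :
    matchCount (subdivision T) k = 0 := by
  classical
  rw [matchCount_eq_card hT]
  rw [Finset.card_eq_zero, Finset.filter_eq_empty_iff]
  intro σ hσ
  intro hc
  have h1 : σ.support.card ≤ Fintype.card (V ⊕ T.edgeSet) := Finset.card_le_univ _
  rw [card_sum_W hT] at h1
  have h2 : 1 ≤ Fintype.card V := by
    have : Nonempty V := hT.isConnected.nonempty
    exact Fintype.card_pos
  omega

lemma detA_match (hT : T.IsTree) (x : ℝ) :
    (x • (1 : Matrix (V ⊕ T.edgeSet) (V ⊕ T.edgeSet) ℝ) - adjM (subdivision T)).det =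
      ∑ k ∈ Finset.range (Fintype.card V), (matchCount (subdivision T) k : ℝ) *
        ((-1 : ℝ) ^ k * x ^ (Fintype.card (V ⊕ T.edgeSet) - 2 * k)) := by
  classical
  have hne : Nonempty V := hT.isConnected.nonempty
  have hn1 : 1 ≤ Fintype.card V := Fintype.card_pos
  rw [detA_eq hT x]
  have hmap : ∀ σ ∈ AdmF T,
      (fun σ : Equiv.Perm (V ⊕ T.edgeSet) => σ.support.card / 2) σ ∈
        Finset.range (Fintype.card V) := by
    intro σ hσ
    obtain ⟨k, hk, -⟩ := adm_even_card hT hσ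
    have h1 : σ.support.card ≤ Fintype.card (V ⊕ T.edgeSet) := Finset.card_le_univ _
    rw [card_sum_W hT] at h1
    rw [Finset.mem_range]
    simp only
    omega
  rw [← Finset.sum_fiberwise_of_maps_to hmap (fun σ : Equiv.Perm (V ⊕ T.edgeSet) =>
      (-1 : ℝ) ^ (σ.support.card / 2) * x ^ (Fintype.card (V ⊕ T.edgeSet) - σ.support.card))]
  refine Finset.sum_congr rfl (fun k hk => ?_)
  have hfe : (AdmF T).filter (fun σ => σ.support.card / 2 = k) =
      (AdmF T).filter (fun σ => σ.support.card = 2 * k) := by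
    apply Finset.filter_congr
    intro σ hσ
    obtain ⟨k', hk', -⟩ := adm_even_card hT hσ
    constructor
    · intro h; omega
    · intro h; omega
  rw [hfe]
  have hconst : ∀ σ ∈ (AdmF T).filter (fun σ => σ.support.card = 2 * k),
      (-1 : ℝ) ^ (σ.support.card / 2) *
          x ^ (Fintype.card (V ⊕ T.edgeSet) - σ.support.card)
        = (-1 : ℝ) ^ k * x ^ (Fintype.card (V ⊕ T.edgeSet) - 2 * k) := by
    intro σ hσ
    have hc : σ.support.card = 2 * k := (Finset.mem_filter.1 hσ).2
    rw [hc, Nat.mul_div_cancel_left k (by norm_num)]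
  rw [Finset.sum_congr rfl hconst, Finset.sum_const, matchCount_eq_card hT k, nsmul_eq_mul]

end Det

section LinAlg

open Matrix

variable {V : Type*} [Fintype V] {T : SimpleGraph V}

/-- The (unsigned) incidence matrix. -/
noncomputable def incid (T : SimpleGraph V) : Matrix V T.edgeSet ℝ :=
  Matrix.of fun v e => if v ∈ (e : Sym2 V) then 1 else 0

lemma other'_eq {u : V} (z : Sym2 V) (h : u ∈ z) (w : V) (hz : z = s(u, w)) (hne : u ≠ w) :
    Sym2.Mem.other' h = w := by
  classical
  subst hz
  have hspec := Sym2.other_spec' h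
  rcases Sym2.eq_iff.1 hspec with ⟨-, h2⟩ | ⟨h1, -⟩
  · exact h2
  · exact absurd h1 hne

lemma card_filter_mem_eq_vdeg (u : V) :
    (Finset.univ.filter (fun e : T.edgeSet => u ∈ (e : Sym2 V))).card = vdeg T u := by
  classical
  rw [vdeg, Set.ncard_eq_toFinset_card']
  have hj : ∀ w ∈ (T.neighborSet u).toFinset, T.Adj u w := by
    intro w hw; rwa [Set.mem_toFinset, SimpleGraph.mem_neighborSet] at hw
  refine Finset.card_bij' (fun e he => Sym2.Mem.other' ((Finset.mem_filter.1 he).2))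
    (fun w hw => ⟨s(u, w), (SimpleGraph.mem_edgeSet T).2 (hj w hw)⟩) ?_ ?_ ?_ ?_
  · intro e he
    rw [Set.mem_toFinset, SimpleGraph.mem_neighborSet]
    have h1 := Sym2.other_spec' ((Finset.mem_filter.1 he).2)
    have h2 := e.2
    rw [← h1] at h2
    exact (SimpleGraph.mem_edgeSet T).1 h2
  · intro w hw
    simp only [Finset.mem_filter, Finset.mem_univ, true_and]
    exact Sym2.mem_mk_left u w
  · intro e he
    apply Subtype.ext
    exact Sym2.other_spec' ((Finset.mem_filter.1 he).2)
  · intro w hw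
    exact other'_eq _ _ w rfl (hj w hw).ne

lemma incid_mul_transpose : incid T * (incid T)ᵀ = signlessLapM T := by
  classical
  ext u v
  rw [Matrix.mul_apply]
  have hterm : ∀ e : T.edgeSet, incid T u e * (incid T)ᵀ e v =
      if u ∈ (e : Sym2 V) ∧ v ∈ (e : Sym2 V) then 1 else 0 := by
    intro e
    simp only [incid, Matrix.transpose_apply, Matrix.of_apply]
    by_cases h1 : u ∈ (e : Sym2 V) <;> by_cases h2 : v ∈ (e : Sym2 V) <;> simp [h1, h2]
  rw [Finset.sum_congr rfl (fun e _ => hterm e), Finset.sum_boole]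
  by_cases h : u = v
  · subst h
    have hfilter : (Finset.univ.filter
        (fun e : T.edgeSet => u ∈ (e : Sym2 V) ∧ u ∈ (e : Sym2 V))) =
        Finset.univ.filter (fun e : T.edgeSet => u ∈ (e : Sym2 V)) := by
      apply Finset.filter_congr
      intro e _
      simp
    rw [hfilter, card_filter_mem_eq_vdeg u]
    simp [signlessLapM]
  · simp only [signlessLapM, Matrix.of_apply, if_neg h]
    by_cases hadj : T.Adj u v
    · rw [if_pos hadj]
      have hfilter : (Finset.univ.filter
          (fun e : T.edgeSet => u ∈ (e : Sym2 V) ∧ v ∈ (e : Sym2 V))) =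
          {⟨s(u, v), (SimpleGraph.mem_edgeSet T).2 hadj⟩} := by
        ext e
        simp only [Finset.mem_filter, Finset.mem_univ, true_and, Finset.mem_singleton]
        constructor
        · rintro ⟨h1, h2⟩
          apply Subtype.ext
          obtain ⟨w, hw⟩ := Sym2.mem_iff_exists.1 h1
          rw [hw] at h2
          rcases Sym2.mem_iff.1 h2 with h3 | h3
          · exact absurd h3.symm h
          · subst h3; exact hw
        · rintro rfl
          exact ⟨Sym2.mem_mk_left u v, Sym2.mem_mk_right u v⟩
      rw [hfilter, Finset.card_singleton]
      norm_num
    · rw [if_neg hadj]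
      have hfilter : (Finset.univ.filter
          (fun e : T.edgeSet => u ∈ (e : Sym2 V) ∧ v ∈ (e : Sym2 V))) = ∅ := by
        rw [Finset.filter_eq_empty_iff]
        rintro e - ⟨h1, h2⟩
        obtain ⟨w, hw⟩ := Sym2.mem_iff_exists.1 h1
        rw [hw] at h2
        rcases Sym2.mem_iff.1 h2 with h3 | h3
        · exact h h3.symm
        · apply hadj
          subst h3
          have h4 := e.2
          rw [hw] at h4
          exact (SimpleGraph.mem_edgeSet T).1 h4
      rw [hfilter, Finset.card_empty]
      norm_num

lemma adjM_subdiv_blocks :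
    adjM (subdivision T) = Matrix.fromBlocks 0 (incid T) (incid T)ᵀ 0 := by
  ext a b
  cases a with
  | inl v =>
    cases b with
    | inl w =>
      simp only [adjM, Matrix.of_apply, Matrix.fromBlocks_apply₁₁, Matrix.zero_apply]
      rw [if_neg]
      rintro (⟨v', e', h1, h2, -⟩ | ⟨v', e', h1, h2, -⟩) <;> simp at h2 h1
    | inr e =>
      simp only [adjM, Matrix.of_apply, Matrix.fromBlocks_apply₁₂, incid]
      rw [show ((subdivision T).Adj (Sum.inl v) (Sum.inr e)) = (v ∈ (e : Sym2 V)) from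
        propext sub_adj_inl_inr]
      by_cases hmem : v ∈ (e : Sym2 V) <;> simp [hmem]
  | inr e =>
    cases b with
    | inl w =>
      simp only [adjM, Matrix.of_apply, Matrix.fromBlocks_apply₂₁, Matrix.transpose_apply, incid]
      rw [show ((subdivision T).Adj (Sum.inr e) (Sum.inl w)) = (w ∈ (e : Sym2 V)) from
        propext (by rw [SimpleGraph.adj_comm]; exact sub_adj_inl_inr)]
      by_cases hmem : w ∈ (e : Sym2 V) <;> simp [hmem]
    | inr f =>
      simp only [adjM, Matrix.of_apply, Matrix.fromBlocks_apply₂₂, Matrix.zero_apply]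
      rw [if_neg]
      rintro (⟨v', e', h1, h2, -⟩ | ⟨v', e', h1, h2, -⟩) <;> simp at h2 h1

lemma det_subdiv (hT : T.IsTree) {x : ℝ} (hx : x ≠ 0) :
    ((x ^ 2) • (1 : Matrix V V ℝ) - signlessLapM T).det =
      x * (x • (1 : Matrix (V ⊕ T.edgeSet) (V ⊕ T.edgeSet) ℝ) - adjM (subdivision T)).det := by
  classical
  have hcardE : Fintype.card T.edgeSet + 1 = Fintype.card V := by
    have h0 : T.edgeFinset.card + 1 = Fintype.card V := hT.card_edgeFinset
    rwa [SimpleGraph.edgeFinset_card] at h0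
  set B := incid T with hB
  have hblock : x • (1 : Matrix (V ⊕ T.edgeSet) (V ⊕ T.edgeSet) ℝ) - adjM (subdivision T) =
      Matrix.fromBlocks (x • 1) (-B) (-Bᵀ) (x • 1) := by
    rw [adjM_subdiv_blocks, ← Matrix.fromBlocks_one, Matrix.fromBlocks_smul, sub_eq_add_neg,
      Matrix.fromBlocks_neg, Matrix.fromBlocks_add]
    simp [hB]
  letI : Invertible (x • (1 : Matrix T.edgeSet T.edgeSet ℝ)) :=
    ⟨x⁻¹ • 1, by rw [Matrix.smul_mul, Matrix.mul_smul, smul_smul, Matrix.one_mul,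
        inv_mul_cancel₀ hx, one_smul], by rw [Matrix.smul_mul, Matrix.mul_smul, smul_smul,
        Matrix.one_mul, mul_inv_cancel₀ hx, one_smul]⟩
  have hinvOf : ⅟(x • (1 : Matrix T.edgeSet T.edgeSet ℝ)) = x⁻¹ • 1 := rfl
  rw [hblock, Matrix.det_fromBlocks₂₂, hinvOf]
  have hschur : ((x • (1 : Matrix V V ℝ)) -
      (-B) * (x⁻¹ • (1 : Matrix T.edgeSet T.edgeSet ℝ)) * (-Bᵀ)) =
      x⁻¹ • ((x ^ 2) • (1 : Matrix V V ℝ) - signlessLapM T) := by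
    rw [← incid_mul_transpose (T := T), ← hB]
    simp only [Matrix.neg_mul, Matrix.mul_neg, neg_neg]
    rw [Matrix.mul_smul, Matrix.mul_one, Matrix.smul_mul]
    rw [smul_sub, smul_smul]
    congr 1
    rw [sq, ← mul_assoc, inv_mul_cancel₀ hx, one_mul]
  rw [hschur, Matrix.det_smul, Matrix.det_smul, Matrix.det_one, mul_one]
  rw [← mul_assoc, ← mul_assoc]
  have hone : x * x ^ Fintype.card T.edgeSet * x⁻¹ ^ Fintype.card V = 1 := by
    rw [← pow_succ', hcardE, ← mul_pow, mul_inv_cancel₀ hx, one_pow]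
  rw [hone, one_mul]

lemma det_lap_eq_signless (hT : T.IsTree) (y : ℝ) :
    (y • (1 : Matrix V V ℝ) - lapM T).det =
      (y • (1 : Matrix V V ℝ) - signlessLapM T).det := by
  classical
  have hne : Nonempty V := hT.isConnected.nonempty
  set r := Classical.arbitrary V with hr
  set d : V → ℝ := fun v => (-1 : ℝ) ^ (T.dist r v) with hd
  set D : Matrix V V ℝ := Matrix.diagonal d with hD
  have hdd : ∀ v, d v * d v = 1 := by
    intro v
    rw [hd, ← pow_add, ← two_mul, pow_mul]
    norm_num
  have hDD : D * D = 1 := by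
    rw [hD, Matrix.diagonal_mul_diagonal]
    have : (fun v => d v * d v) = fun _ => (1 : ℝ) := funext hdd
    rw [this, Matrix.diagonal_one]
  have hconj : D * (y • (1 : Matrix V V ℝ) - lapM T) * D =
      y • (1 : Matrix V V ℝ) - signlessLapM T := by
    rw [hD]
    ext u v
    rw [Matrix.mul_diagonal, Matrix.diagonal_mul]
    simp only [Matrix.sub_apply, Matrix.smul_apply, Matrix.one_apply, lapM, signlessLapM,
      Matrix.of_apply, smul_eq_mul]
    by_cases h : u = v
    · subst h
      simp only [if_pos rfl]
      calc d u * (y * 1 - ↑(vdeg T u)) * d u = (y * 1 - ↑(vdeg T u)) * (d u * d u) := by ring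
        _ = y * 1 - ↑(vdeg T u) := by rw [hdd u, mul_one]
    · simp only [if_neg h]
      by_cases hadj : T.Adj u v
      · simp only [if_pos hadj]
        have hgen : ∀ a : ℕ, (-1 : ℝ) ^ a * (-1 : ℝ) ^ (a + 1) = -1 := by
          intro a
          rw [← pow_add]
          have h5 : a + (a + 1) = 2 * a + 1 := by ring
          rw [h5, pow_succ, pow_mul]
          norm_num
        have hduv : d u * d v = -1 := by
          rcases adj_dist_cases hT r hadj with hc | hc
          · simp only [hd]
            rw [hc]
            exact hgen _
          · simp only [hd]
            rw [hc, mul_comm]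
            exact hgen _
        calc d u * (y * 0 - -1) * d v = d u * d v := by ring
          _ = y * 0 - 1 := by rw [hduv]; ring
      · simp only [if_neg hadj]
        ring
  have hdet1 : D.det * D.det = 1 := by
    rw [← Matrix.det_mul, hDD, Matrix.det_one]
  calc (y • (1 : Matrix V V ℝ) - lapM T).det
      = (y • (1 : Matrix V V ℝ) - lapM T).det * (D.det * D.det) := by rw [hdet1, mul_one]
    _ = (D * (y • (1 : Matrix V V ℝ) - lapM T) * D).det := by
        rw [Matrix.det_mul, Matrix.det_mul]; ring
    _ = (y • (1 : Matrix V V ℝ) - signlessLapM T).det := by rw [hconj]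

lemma eval_charpoly {n : Type*} [Fintype n] [DecidableEq n] (M : Matrix n n ℝ) (y : ℝ) :
    (M.charpoly).eval y = (y • (1 : Matrix n n ℝ) - M).det := by
  rw [Matrix.charpoly, ← Polynomial.coe_evalRingHom, RingHom.map_det]
  congr 1
  ext i j
  by_cases h : i = j
  · subst h
    simp [Matrix.charmatrix_apply_eq, Matrix.smul_apply, Matrix.sub_apply, Matrix.one_apply]
  · simp [Matrix.charmatrix_apply_ne _ _ _ h, Matrix.smul_apply, Matrix.sub_apply,
      Matrix.one_apply, h]

end LinAlg

theorem lapCoeff_eq_matchCount_subdivision' {V : Type*} [Fintype V]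
    (T : SimpleGraph V) (hT : T.IsTree) :
    (∀ k ≤ Fintype.card V, lapCoeff T k = matchCount (subdivision T) k) ∧
    ∀ x : ℝ, lapGen T x = matchGen (subdivision T) x := by
  classical
  have hne : Nonempty V := hT.isConnected.nonempty
  have hn1 : 1 ≤ Fintype.card V := Fintype.card_pos
  set n := Fintype.card V with hn
  set m : ℕ → ℕ := fun k => matchCount (subdivision T) k with hm
  set R : Polynomial ℝ := ∑ k ∈ Finset.range (n + 1),
    Polynomial.C ((-1 : ℝ) ^ k * (m k : ℝ)) * Polynomial.X ^ (n - k) with hR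
  have hReval : ∀ y : ℝ, R.eval y =
      ∑ k ∈ Finset.range (n + 1), (-1 : ℝ) ^ k * (m k : ℝ) * y ^ (n - k) := by
    intro y
    rw [hR, Polynomial.eval_finset_sum]
    refine Finset.sum_congr rfl fun k _ => ?_
    simp
  have hkey : (lapM T).charpoly = R := by
    have hroot : ∀ y : ℝ, 0 < y → ((lapM T).charpoly - R).IsRoot y := by
      intro y hy
      set x := Real.sqrt y with hx
      have hx0 : x ≠ 0 := (Real.sqrt_pos.2 hy).ne'
      have hxx : x ^ 2 = y := Real.sq_sqrt hy.le
      show ((lapM T).charpoly - R).eval y = 0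
      rw [Polynomial.eval_sub, eval_charpoly, sub_eq_zero]
      calc (y • (1 : Matrix V V ℝ) - lapM T).det
          = (y • (1 : Matrix V V ℝ) - signlessLapM T).det := det_lap_eq_signless hT y
        _ = x * ((x • (1 : Matrix (V ⊕ T.edgeSet) (V ⊕ T.edgeSet) ℝ) -
              adjM (subdivision T)).det) := by rw [← hxx]; exact det_subdiv hT hx0
        _ = x * ∑ k ∈ Finset.range n, (m k : ℝ) *
              ((-1 : ℝ) ^ k * x ^ (Fintype.card (V ⊕ T.edgeSet) - 2 * k)) := by
            rw [detA_match hT x]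
        _ = ∑ k ∈ Finset.range n, (-1 : ℝ) ^ k * (m k : ℝ) * y ^ (n - k) := by
            rw [Finset.mul_sum]
            refine Finset.sum_congr rfl fun k hk => ?_
            rw [Finset.mem_range] at hk
            have h6 : Fintype.card (V ⊕ T.edgeSet) - 2 * k + 1 = 2 * (n - k) := by
              rw [card_sum_W hT]
              omega
            calc x * ((m k : ℝ) * ((-1 : ℝ) ^ k *
                  x ^ (Fintype.card (V ⊕ T.edgeSet) - 2 * k)))
                = (-1 : ℝ) ^ k * (m k : ℝ) *
                  (x * x ^ (Fintype.card (V ⊕ T.edgeSet) - 2 * k)) := by ring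
              _ = (-1 : ℝ) ^ k * (m k : ℝ) * y ^ (n - k) := by
                  rw [← pow_succ', h6, pow_mul, hxx]
        _ = R.eval y := by
            rw [hReval, Finset.sum_range_succ]
            have hmn : m n = 0 := matchCount_zero hT le_rfl
            rw [hmn]
            simp
    have hsub : Set.Ioi (0 : ℝ) ⊆ {y | ((lapM T).charpoly - R).IsRoot y} :=
      fun y hy => hroot y hy
    have hinf : {y | ((lapM T).charpoly - R).IsRoot y}.Infinite :=
      Set.Infinite.mono hsub (Set.Ioi_infinite 0)
    have h0 := Polynomial.eq_zero_of_infinite_isRoot _ hinf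
    exact sub_eq_zero.1 h0
  have part1 : ∀ k ≤ n, lapCoeff T k = (m k : ℝ) := by
    intro k hk
    rw [lapCoeff, hkey, hR, Polynomial.finset_sum_coeff]
    rw [Finset.sum_eq_single k]
    · rw [Polynomial.coeff_C_mul, Polynomial.coeff_X_pow, if_pos rfl, mul_one, ← mul_assoc]
      have h7 : (-1 : ℝ) ^ k * (-1 : ℝ) ^ k = 1 := by
        rw [← pow_add, ← two_mul, pow_mul]
        norm_num
      rw [h7, one_mul]
    · intro j hj hjk
      rw [Polynomial.coeff_C_mul, Polynomial.coeff_X_pow, if_neg, mul_zero]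
      rw [Finset.mem_range] at hj
      intro h
      apply hjk
      omega
    · intro h
      exact absurd (Finset.mem_range.2 (by omega)) h
  refine ⟨part1, ?_⟩
  intro x
  rw [lapGen, matchGen]
  have hcards : Fintype.card (V ⊕ T.edgeSet) + 1 = 2 * n := by
    rw [card_sum_W hT]
    omega
  rw [hcards]
  rw [← Finset.sum_subset (Finset.range_subset_range.2 (by omega : n ≤ 2 * n))]
  · refine Finset.sum_congr rfl fun k hk => ?_
    rw [Finset.mem_range] at hk
    rw [part1 k (by omega)]
  · intro k hk hnk
    rw [Finset.mem_range] at hk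
    rw [Finset.mem_range] at hnk
    push_neg at hnk
    rw [matchCount_zero hT hnk]
    simp

end ZG
end ZGAux

/-- Zhou–Gutman (Lemma 3.8): for every tree `T` of order `n`, the Laplacian
coefficient `c_k(T)` equals the number of `k`-matchings of the subdivision tree,
`c_k(T) = m(S(T),k)` for `k = 0,…,n`; consequently the Laplacian coefficient
generating function equals the matching generating function of `S(T)`. -/
theorem lapCoeff_eq_matchCount_subdivision {V : Type*} [Fintype V]
    (T : SimpleGraph V) (hT : T.IsTree) :
    (∀ k ≤ Fintype.card V, lapCoeff T k = matchCount (subdivision T) k) ∧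
    ∀ x : ℝ, lapGen T x = matchGen (subdivision T) x := by
  exact ZG.lapCoeff_eq_matchCount_subdivision' T hT
end

section
/- For any tree T on n vertices, the Laplacian characteristic polynomial satisfies L(T, λ²) = λ · A(S(T), λ), where A(S(T), λ) is the adjacency characteristic polynomial of the subdivision tree S(T). Consequently, the adjacency eigenvalues of S(T) are ±√μ_1, ..., ±√μ_{n-1}, 0, where μ_1 ≥ ... ≥ μ_{n-1} ≥ μ_n = 0 are the Laplacian eigenvalues of T. -/
open scoped Classical

variable {V : Type*}

section AuxLemmas

open Polynomial Matrix

lemma tree_path_length {T : SimpleGraph V} (hT : T.IsTree) {a b : V}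
    (p : T.Walk a b) (hp : p.IsPath) : p.length = T.dist a b := by
  obtain ⟨q, hq, hql⟩ := hT.isConnected.exists_path_of_dist a b
  have := (SimpleGraph.isAcyclic_iff_path_unique.mp hT.IsAcyclic) ⟨p, hp⟩ ⟨q, hq⟩
  rw [show p = q from congrArg Subtype.val this, hql]

lemma tree_parity {T : SimpleGraph V} (hT : T.IsTree) (v₀ : V) {u w : V}
    (h : T.Adj u w) : Odd (T.dist v₀ u + T.dist v₀ w) := by
  obtain ⟨p, hp, hpl⟩ := hT.isConnected.exists_path_of_dist v₀ u
  by_cases hw : w ∈ p.support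
  · have h1 : T.dist v₀ u = T.dist v₀ w + 1 := by
      have hsplit := p.take_spec hw
      have hlen : (p.takeUntil w hw).length + (p.dropUntil w hw).length = p.length := by
        rw [← SimpleGraph.Walk.length_append, hsplit]
      have h2 : T.dist v₀ w ≤ (p.takeUntil w hw).length := SimpleGraph.dist_le _
      have h3 : T.dist w u ≤ (p.dropUntil w hw).length := SimpleGraph.dist_le _
      have h4 : T.dist w u = 1 := SimpleGraph.dist_eq_one_iff_adj.mpr h.symm
      have h5 : T.dist v₀ u ≤ T.dist v₀ w + T.dist w u := hT.isConnected.dist_triangle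
      omega
    exact ⟨T.dist v₀ w, by omega⟩
  · have hcp : (p.concat h).IsPath := by
      rw [← SimpleGraph.Walk.isPath_reverse_iff, SimpleGraph.Walk.reverse_concat]
      rw [SimpleGraph.Walk.cons_isPath_iff]
      refine ⟨hp.reverse, ?_⟩
      simpa using hw
    have := tree_path_length hT (p.concat h) hcp
    rw [SimpleGraph.Walk.length_concat, hpl] at this
    exact ⟨T.dist v₀ u, by omega⟩

/-- Incidence matrix of `G` over ℝ. -/
noncomputable def incM (G : SimpleGraph V) : Matrix V G.edgeSet ℝ :=
  Matrix.of fun v e => if v ∈ (e : Sym2 V) then 1 else 0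

lemma adjM_subdivision (G : SimpleGraph V) [Fintype V] [Fintype G.edgeSet] :
    adjM (subdivision G) = Matrix.fromBlocks 0 (incM G) (incM G).transpose 0 := by
  ext i j
  rcases i with v | e <;> rcases j with w | f <;>
    simp [adjM, subdivision, incM, Matrix.fromBlocks]

lemma incM_mul_transpose (G : SimpleGraph V) [Fintype V] [Fintype G.edgeSet] :
    incM G * (incM G).transpose = signlessLapM G := by
  ext v w
  simp only [Matrix.mul_apply, Matrix.transpose_apply, incM, Matrix.of_apply,
    signlessLapM]
  by_cases hvw : v = w
  · subst hvw
    simp only [if_pos rfl]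
    have : ∀ e : G.edgeSet, (if v ∈ (e : Sym2 V) then (1:ℝ) else 0) *
        (if v ∈ (e : Sym2 V) then 1 else 0) = if v ∈ (e : Sym2 V) then 1 else 0 := by
      intro e; by_cases h : v ∈ (e : Sym2 V) <;> simp [h]
    rw [Finset.sum_congr rfl fun e _ => this e, Finset.sum_boole]
    have key : Fintype.card {e : G.edgeSet // v ∈ (e : Sym2 V)} = vdeg G v := by
      have e1 : {e : G.edgeSet // v ∈ (e : Sym2 V)} ≃ G.incidenceSet v :=
        (Equiv.subtypeSubtypeEquivSubtypeInter (· ∈ G.edgeSet) (v ∈ ·)).trans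
          (Equiv.subtypeEquivRight fun e => Iff.rfl)
      rw [← Nat.card_eq_fintype_card, Nat.card_congr e1,
        Nat.card_congr (G.incidenceSetEquivNeighborSet v), Nat.card_coe_set_eq]
      rfl
    rw [← key, Fintype.card_subtype]
    simp
  · simp only [if_neg hvw]
    by_cases hadj : G.Adj v w
    · rw [if_pos hadj]
      have hmem : s(v, w) ∈ G.edgeSet := hadj
      rw [Finset.sum_eq_single_of_mem (⟨s(v, w), hmem⟩ : G.edgeSet) (Finset.mem_univ _)]
      · simp
      · rintro ⟨e, he⟩ - hne
        by_cases h1 : v ∈ e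
        · by_cases h2 : w ∈ e
          · exfalso; apply hne
            have := (Sym2.mem_and_mem_iff hvw).mp ⟨h1, h2⟩
            simp [Subtype.ext_iff, this]
          · simp [h2]
        · simp [h1]
    · rw [if_neg hadj]
      apply Finset.sum_eq_zero
      rintro ⟨e, he⟩ -
      by_cases h1 : v ∈ e
      · by_cases h2 : w ∈ e
        · exfalso
          have := (Sym2.mem_and_mem_iff hvw).mp ⟨h1, h2⟩
          rw [this] at he
          exact hadj he
        · simp [h2]
      · simp [h1]

lemma charmatrix_zero' {m : Type*} [Fintype m] [DecidableEq m] :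
    charmatrix (0 : Matrix m m ℝ) = (X : ℝ[X]) • (1 : Matrix m m ℝ[X]) := by
  ext i j
  by_cases h : i = j
  · subst h; simp [charmatrix_apply_eq, Matrix.one_apply]
  · simp [charmatrix_apply_ne _ _ _ h, Matrix.one_apply_ne h, h]

lemma block_charpoly {m n : Type*} [Fintype m] [Fintype n] [DecidableEq m] [DecidableEq n]
    (b : Matrix m n ℝ) :
    (fromBlocks 0 b bᵀ 0).charpoly * X ^ (Fintype.card m) =
      ((b * bᵀ).charpoly.comp (X ^ 2)) * X ^ (Fintype.card n) := by
  classical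
  set R := ℝ[X]
  set bC : Matrix m n R := b.map (C : ℝ →+* ℝ[X]) with hbC
  have htr : bᵀ.map (C : ℝ →+* ℝ[X]) = bCᵀ := by
    rw [hbC, Matrix.transpose_map]
  have hM : charmatrix (fromBlocks (0 : Matrix m m ℝ) b bᵀ 0) =
      fromBlocks ((X : R) • 1) (-bC) (-bCᵀ) ((X : R) • 1) := by
    rw [charmatrix_fromBlocks, charmatrix_zero', charmatrix_zero', htr]
  set N : Matrix (m ⊕ n) (m ⊕ n) R := fromBlocks ((X : R) • 1) 0 bCᵀ 1 with hN
  have hdetN : N.det = X ^ (Fintype.card m) := by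
    rw [hN, det_fromBlocks_zero₁₂, det_one, mul_one, det_smul, det_one, mul_one]
  have hMN : fromBlocks ((X : R) • 1) (-bC) (-bCᵀ) ((X : R) • 1) * N =
      fromBlocks ((X ^ 2 : R) • 1 - bC * bCᵀ) (-bC) 0 ((X : R) • 1) := by
    rw [hN, fromBlocks_multiply]
    simp only [Matrix.smul_mul, Matrix.mul_smul, one_mul, Matrix.mul_one, Matrix.mul_zero,
      Matrix.one_mul, Matrix.neg_mul, zero_add, add_zero, smul_smul, pow_two,
      sub_eq_add_neg, smul_neg, neg_add_cancel]
  have hmul : bC * bCᵀ = (b * bᵀ).map (C : ℝ →+* ℝ[X]) := by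
    rw [Matrix.map_mul, htr]
  have hTL : ((X ^ 2 : R) • 1 - bC * bCᵀ).det = (b * bᵀ).charpoly.comp (X ^ 2) := by
    have hc : (b * bᵀ).charpoly.comp (X ^ 2) =
        (Polynomial.eval₂RingHom Polynomial.C ((X : ℝ[X]) ^ 2)) (b * bᵀ).charpoly := by
      rw [Polynomial.coe_eval₂RingHom]; rfl
    rw [hc, Matrix.charpoly, RingHom.map_det]
    congr 1
    refine Matrix.ext fun i j => ?_
    by_cases h : i = j
    · subst h
      simp [charmatrix_apply_eq, Matrix.one_apply]
      rw [hmul, Matrix.map_apply]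
    · simp [charmatrix_apply_ne _ _ _ h, Matrix.one_apply_ne h]
      rw [hmul, Matrix.map_apply]
  calc (fromBlocks 0 b bᵀ 0).charpoly * X ^ (Fintype.card m)
      = (charmatrix (fromBlocks (0 : Matrix m m ℝ) b bᵀ 0)).det * N.det := by
        rw [hdetN]; rfl
    _ = (fromBlocks ((X ^ 2 : R) • 1 - bC * bCᵀ) (-bC) 0 ((X : R) • 1)).det := by
        rw [← det_mul, hM, hMN]
    _ = ((b * bᵀ).charpoly.comp (X ^ 2)) * X ^ (Fintype.card n) := by
        rw [det_fromBlocks_zero₂₁, hTL, det_smul, det_one, mul_one]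

lemma charpoly_conj {W : Type*} [Fintype W] [DecidableEq W] (S A : Matrix W W ℝ)
    (h1 : S * S = 1) : (S * A * S).charpoly = A.charpoly := by
  have hS' : S.map (C : ℝ →+* ℝ[X]) * S.map C = 1 := by
    rw [← Matrix.map_mul, h1]
    simp
  have hcomm : Commute (scalar W (X : ℝ[X])) (S.map (C : ℝ →+* ℝ[X])) :=
    scalar_commute _ (fun r => Commute.all _ _) _
  have hchar : charmatrix (S * A * S) = S.map C * charmatrix A * S.map C := by
    unfold charmatrix
    rw [Matrix.mul_sub, Matrix.sub_mul]
    congr 1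
    · rw [← hcomm.eq, Matrix.mul_assoc, hS', Matrix.mul_one]
    · simp only [RingHom.mapMatrix_apply]
      rw [← Matrix.map_mul, ← Matrix.map_mul]
  rw [Matrix.charpoly, Matrix.charpoly, hchar, det_mul, det_mul, mul_comm, ← mul_assoc,
    ← det_mul, hS', det_one, one_mul]

lemma comp_X_sq_coeff_one (p : Polynomial ℝ) : (p.comp ((X : ℝ[X]) ^ 2)).coeff 1 = 0 := by
  rw [Polynomial.comp_eq_sum_left, Polynomial.sum_def, Polynomial.finset_sum_coeff]
  apply Finset.sum_eq_zero
  intro e _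
  rw [← pow_mul, Polynomial.coeff_C_mul, Polynomial.coeff_X_pow, if_neg (by omega), mul_zero]

end AuxLemmas

open Polynomial in
/-- For any tree `T` on `n` vertices, `𝓛(T, λ²) = λ · 𝓐(S(T), λ)`, where `𝓛` is
the Laplacian characteristic polynomial of `T` and `𝓐` the adjacency
characteristic polynomial of the subdivision tree `S(T)`.  Consequently the
adjacency eigenvalues of `S(T)` are exactly the numbers `r` with `r²` a
Laplacian eigenvalue of `T` (i.e. `±√μ₁, …, ±√μ_{n-1}, 0`). -/
theorem lap_charpoly_comp_sq {V : Type*} [Fintype V]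
    (T : SimpleGraph V) (hT : T.IsTree) :
    (lapM T).charpoly.comp (X ^ 2) = X * (adjM (subdivision T)).charpoly ∧
    ∀ r : ℝ, (adjM (subdivision T)).charpoly.IsRoot r ↔
      (lapM T).charpoly.IsRoot (r ^ 2) := by
  classical
  have hES : Fintype.card T.edgeSet + 1 = Fintype.card V := by
    have h := hT.card_edgeFinset
    rwa [SimpleGraph.edgeFinset_card] at h
  obtain ⟨v₀⟩ : Nonempty V := hT.isConnected.nonempty
  set S : Matrix V V ℝ := Matrix.diagonal fun v => (-1 : ℝ) ^ (T.dist v₀ v) with hS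
  have hSS : S * S = 1 := by
    rw [hS, Matrix.diagonal_mul_diagonal]
    have h1 : ∀ v, (-1 : ℝ) ^ (T.dist v₀ v) * (-1) ^ (T.dist v₀ v) = 1 := by
      intro v; rw [← pow_add]; exact Even.neg_one_pow ⟨_, rfl⟩
    simp only [h1]
    exact Matrix.diagonal_one
  have hconj : S * signlessLapM T * S = lapM T := by
    ext i j
    have hentry : (S * signlessLapM T * S) i j =
        ((-1 : ℝ) ^ (T.dist v₀ i)) * signlessLapM T i j * ((-1) ^ (T.dist v₀ j)) := by
      rw [hS, Matrix.mul_diagonal, Matrix.diagonal_mul]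
    rw [hentry]
    show _ = lapM T i j
    unfold signlessLapM lapM
    simp only [Matrix.of_apply]
    by_cases hij : i = j
    · subst hij
      rw [if_pos rfl, if_pos rfl]
      have he : (-1 : ℝ) ^ (T.dist v₀ i) * (-1) ^ (T.dist v₀ i) = 1 := by
        rw [← pow_add]; exact Even.neg_one_pow ⟨_, rfl⟩
      linear_combination (vdeg T i : ℝ) * he
    · rw [if_neg hij, if_neg hij]
      by_cases hadj : T.Adj i j
      · rw [if_pos hadj, if_pos hadj, mul_one, ← pow_add]
        exact Odd.neg_one_pow (tree_parity hT v₀ hadj)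
      · rw [if_neg hadj, if_neg hadj, mul_zero, zero_mul]
  have hQL : (signlessLapM T).charpoly = (lapM T).charpoly := by
    rw [← hconj]
    exact (charpoly_conj S _ hSS).symm
  have hblock := block_charpoly (incM T)
  rw [incM_mul_transpose, hQL, ← adjM_subdivision] at hblock
  have hmain : (lapM T).charpoly.comp (X ^ 2) = X * (adjM (subdivision T)).charpoly := by
    have hx : ((X : ℝ[X]) ^ (Fintype.card T.edgeSet)) ≠ 0 :=
      pow_ne_zero _ Polynomial.X_ne_zero
    apply mul_right_cancel₀ hx
    rw [← hblock, ← hES, pow_succ]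
    ring
  refine ⟨hmain, fun r => ?_⟩
  have heval : (lapM T).charpoly.eval (r ^ 2) =
      r * (adjM (subdivision T)).charpoly.eval r := by
    have h := congrArg (Polynomial.eval r) hmain
    simpa [Polynomial.eval_comp] using h
  by_cases hr : r = 0
  · subst hr
    simp only [Polynomial.IsRoot]
    constructor
    · intro _
      simpa using heval
    · intro _
      have h1 := congrArg (fun p => Polynomial.coeff p 1) hmain
      simp only [Polynomial.coeff_X_mul] at h1
      rw [comp_X_sq_coeff_one] at h1
      rw [← Polynomial.coeff_zero_eq_eval_zero]
      exact h1.symm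
  · rw [Polynomial.IsRoot, Polynomial.IsRoot]
    constructor
    · intro h
      rw [heval, h, mul_zero]
    · intro h
      rw [h] at heval
      rcases mul_eq_zero.mp heval.symm with h' | h'
      · exact absurd h' hr
      · exact h'
end
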